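/- Let a > 0, N ∈ ℕ, and let φ ∈ C_c^∞(ℝ) be supported in [a,+∞). Then for every (z,t) ∈ ℂⁿ × ℝ, |(|z|² − it)^N ∫_ℝ φ(ξ) e^{−ξ|z|²} e^{iξt} dξ| ≤ e^{−a|z|²} ∫_ℝ |φ^{(N)}(ξ)| dξ, where φ^{(N)} denotes the N-th derivative of φ. -/

import Mathlib

open MeasureTheory Complex Filter
open scoped ContDiff ENNReal

noncomputable section

abbrev Hgrp (n : ℕ) := (Fin n → ℂ) × ℝ

def nsq {n : ℕ} (z : Fin n → ℂ) : ℝ := ∑ j, Complex.normSq (z j)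

def dZ {n : ℕ} (j : Fin n) (f : Hgrp n → ℂ) : Hgrp n → ℂ := fun p =>
  (1/2 : ℂ) * (fderiv ℝ f p (Pi.single j 1, 0) - Complex.I * fderiv ℝ f p (Pi.single j Complex.I, 0))

def dZbar {n : ℕ} (j : Fin n) (f : Hgrp n → ℂ) : Hgrp n → ℂ := fun p =>
  (1/2 : ℂ) * (fderiv ℝ f p (Pi.single j 1, 0) + Complex.I * fderiv ℝ f p (Pi.single j Complex.I, 0))

def dT {n : ℕ} (f : Hgrp n → ℂ) : Hgrp n → ℂ := fun p => fderiv ℝ f p (0, 1)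

def Lop {n : ℕ} (j : Fin n) (f : Hgrp n → ℂ) : Hgrp n → ℂ := fun p =>
  dZ j f p + Complex.I * (starRingEnd ℂ) (p.1 j) * dT f p

def Lbar {n : ℕ} (j : Fin n) (f : Hgrp n → ℂ) : Hgrp n → ℂ := fun p =>
  dZbar j f p - Complex.I * (p.1 j) * dT f p

/-- `f` is CR in the sense of distributions. -/
def IsCRfun {n : ℕ} (f : Hgrp n → ℂ) : Prop :=
  ∀ j : Fin n, ∀ φ : Hgrp n → ℂ, ContDiff ℝ ∞ φ → HasCompactSupport φ →
    ∫ p : Hgrp n, f p * Lbar j φ p = 0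

def pFourier {n : ℕ} (f : Hgrp n → ℂ) (z : Fin n → ℂ) (ξ : ℝ) : ℂ :=
  (Real.sqrt (2 * Real.pi))⁻¹ • ∫ t : ℝ, f (z, t) * Complex.exp (-Complex.I * ξ * t)

/-- for φ ∈ C_c^∞(ℝ) supported in [a,∞), a > 0,
|(|z|² − it)^N ∫ φ(ξ) e^{−ξ|z|²} e^{iξt} dξ| ≤ e^{−a|z|²} ∫ |φ^{(N)}|. -/


-- integral of derivative of compactly supported C¹ function is 0
lemma integral_deriv_zero (f : ℝ → ℂ) (hf : ContDiff ℝ 1 f) (h2f : HasCompactSupport f) :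
    ∫ x : ℝ, deriv f x = 0 := by
  rw [← setIntegral_univ, ← Set.Iic_union_Ioi (a := (0:ℝ)),
    setIntegral_union (Set.Iic_disjoint_Ioi le_rfl) measurableSet_Ioi
      ((hf.continuous_deriv le_rfl).integrable_of_hasCompactSupport h2f.deriv).integrableOn
      ((hf.continuous_deriv le_rfl).integrable_of_hasCompactSupport h2f.deriv).integrableOn,
    h2f.integral_Iic_deriv_eq hf, h2f.integral_Ioi_deriv_eq hf]
  ring

lemma ibp_step (w : ℂ) (ψ : ℝ → ℂ) (hψ : ContDiff ℝ ∞ ψ) (hψc : HasCompactSupport ψ) :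
    ∫ ξ : ℝ, deriv ψ ξ * Complex.exp (-(ξ : ℂ) * w)
      = w * ∫ ξ : ℝ, ψ ξ * Complex.exp (-(ξ : ℂ) * w) := by
  have hg : ∀ ξ : ℝ, HasDerivAt (fun ξ : ℝ => Complex.exp (-(ξ : ℂ) * w))
      (-w * Complex.exp (-(ξ : ℂ) * w)) ξ := by
    intro ξ
    have h1 : HasDerivAt (fun ξ : ℝ => -(ξ : ℂ) * w) (-w) ξ := by
      simpa using ((Complex.ofRealCLM.hasDerivAt (x := ξ)).neg.mul_const w)
    simpa [mul_comm, Function.comp_def] using (Complex.hasDerivAt_exp (-(ξ:ℂ)*w)).comp ξ h1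
  have hgc : Continuous (fun ξ : ℝ => Complex.exp (-(ξ : ℂ) * w)) := by
    continuity
  set F : ℝ → ℂ := fun ξ => ψ ξ * Complex.exp (-(ξ : ℂ) * w) with hF
  have hFd : ∀ ξ : ℝ, HasDerivAt F
      (deriv ψ ξ * Complex.exp (-(ξ : ℂ) * w) + ψ ξ * (-w * Complex.exp (-(ξ : ℂ) * w))) ξ :=
    fun ξ => ((hψ.differentiable (by norm_num) ξ).hasDerivAt).mul (hg ξ)
  have hF1 : ContDiff ℝ 1 F := (hψ.of_le (by norm_num)).mul
    ((Complex.ofRealCLM.contDiff.neg.mul contDiff_const).cexp)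
  have hFc : HasCompactSupport F := hψc.mul_right
  have h0 : ∫ x : ℝ, deriv F x = 0 := integral_deriv_zero F hF1 hFc
  have hderivF : deriv F = fun ξ =>
      deriv ψ ξ * Complex.exp (-(ξ : ℂ) * w) + ψ ξ * (-w * Complex.exp (-(ξ : ℂ) * w)) := by
    ext ξ; exact (hFd ξ).deriv
  have hi1 : Integrable (fun ξ : ℝ => deriv ψ ξ * Complex.exp (-(ξ : ℂ) * w)) :=
    (((hψ.of_le (by norm_num : (1:WithTop ℕ∞) ≤ ((⊤:ℕ∞):WithTop ℕ∞))).continuous_deriv le_rfl).mul hgc).integrable_of_hasCompactSupport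
      (hψc.deriv.mul_right)
  have hi2 : Integrable (fun ξ : ℝ => ψ ξ * (-w * Complex.exp (-(ξ : ℂ) * w))) :=
    (hψ.continuous.mul (continuous_const.mul hgc)).integrable_of_hasCompactSupport
      (hψc.mul_right)
  rw [hderivF, integral_add hi1 hi2] at h0
  have : ∫ ξ : ℝ, ψ ξ * (-w * Complex.exp (-(ξ:ℂ)*w))
      = -w * ∫ ξ : ℝ, ψ ξ * Complex.exp (-(ξ:ℂ)*w) := by
    rw [← integral_const_mul]; congr 1; ext ξ; ring
  rw [this] at h0
  linear_combination h0

lemma hcs_iter (N : ℕ) (φ : ℝ → ℂ) (hφc : HasCompactSupport φ) :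
    HasCompactSupport (iteratedDeriv N φ) := by
  induction N with
  | zero => simpa using hφc
  | succ k ihk => rw [iteratedDeriv_succ]; exact ihk.deriv

lemma ibp_iter (w : ℂ) (N : ℕ) (φ : ℝ → ℂ) (hφ : ContDiff ℝ ∞ φ) (hφc : HasCompactSupport φ) :
    w ^ N * ∫ ξ : ℝ, φ ξ * Complex.exp (-(ξ : ℂ) * w)
      = ∫ ξ : ℝ, iteratedDeriv N φ ξ * Complex.exp (-(ξ : ℂ) * w) := by
  induction N with
  | zero => simp
  | succ N ih =>
      have hiN : ContDiff ℝ ∞ (iteratedDeriv N φ) := by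
        rw [iteratedDeriv_eq_iterate]
        exact hφ.iterate_deriv N
      have hiNc : HasCompactSupport (iteratedDeriv N φ) := hcs_iter N φ hφc
      rw [pow_succ, mul_comm (w ^ N) w, mul_assoc, ih, ← ibp_step w _ hiN hiNc,
        iteratedDeriv_succ]

lemma supp_iter (N : ℕ) (φ : ℝ → ℂ) : Function.support (iteratedDeriv N φ) ⊆ tsupport φ := by
  induction N with
  | zero => simpa using subset_tsupport φ
  | succ k ihk =>
      rw [iteratedDeriv_succ]
      exact (support_deriv_subset).trans (closure_minimal ihk isClosed_closure)

theorem integration_by_parts_decay (n : ℕ) (a : ℝ) (ha : 0 < a) (N : ℕ)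
    (φ : ℝ → ℂ) (hφ : ContDiff ℝ ∞ φ) (hφc : HasCompactSupport φ)
    (hφsupp : Function.support φ ⊆ Set.Ici a) (z : Fin n → ℂ) (t : ℝ) :
    ‖((nsq z : ℂ) - Complex.I * t) ^ N *
        ∫ ξ : ℝ, φ ξ * Complex.exp (-(ξ : ℂ) * (nsq z : ℂ)) * Complex.exp (Complex.I * ξ * t)‖
      ≤ Real.exp (-a * nsq z) * ∫ ξ : ℝ, ‖iteratedDeriv N φ ξ‖ := by
  set w : ℂ := (nsq z : ℂ) - Complex.I * t with hw
  have hnsq : 0 ≤ nsq z := Finset.sum_nonneg fun j _ => Complex.normSq_nonneg _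
  have hrw : ∀ ξ : ℝ, φ ξ * Complex.exp (-(ξ : ℂ) * (nsq z : ℂ))
      * Complex.exp (Complex.I * ξ * t) = φ ξ * Complex.exp (-(ξ : ℂ) * w) := by
    intro ξ
    rw [mul_assoc, ← Complex.exp_add]
    rw [hw]
    ring_nf
  simp_rw [hrw]
  rw [ibp_iter w N φ hφ hφc]
  refine (norm_integral_le_integral_norm _).trans ?_
  rw [← integral_const_mul]
  have hDcont : Continuous (iteratedDeriv N φ) := by
    have := (hφ.iterate_deriv N)
    rw [iteratedDeriv_eq_iterate]
    exact this.continuous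
  have hDc : HasCompactSupport (iteratedDeriv N φ) := hcs_iter N φ hφc
  refine integral_mono ?_ ?_ ?_
  · exact ((hDcont.mul (by continuity)).integrable_of_hasCompactSupport
      hDc.mul_right).norm
  · exact (hDcont.integrable_of_hasCompactSupport hDc).norm.const_mul _
  · intro ξ
    show ‖iteratedDeriv N φ ξ * Complex.exp (-(ξ : ℂ) * w)‖
      ≤ Real.exp (-a * nsq z) * ‖iteratedDeriv N φ ξ‖
    by_cases hξ : iteratedDeriv N φ ξ = 0
    · simp only [hξ, zero_mul, norm_zero, norm_mul]
      positivity
    · have hmem : ξ ∈ Set.Ici a := closure_minimal hφsupp isClosed_Ici (supp_iter N φ hξ)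
      have hexp : ‖Complex.exp (-(ξ : ℂ) * w)‖ = Real.exp (-ξ * nsq z) := by
        rw [Complex.norm_exp]
        congr 1
        simp only [hw, neg_mul, neg_re, mul_re, ofReal_re, sub_re, ofReal_im, sub_im, mul_im,
          Complex.I_re, Complex.I_im]
        ring
      rw [norm_mul, hexp, mul_comm]
      have hle : Real.exp (-ξ * nsq z) ≤ Real.exp (-a * nsq z) :=
        Real.exp_le_exp.mpr (by nlinarith [hmem.out])
      exact mul_le_mul_of_nonneg_right hle (norm_nonneg _)
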